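/- Let ρ ∈ (0, 1/4] and p ≥ 2. Define v = e_r + e_{r'} for r ≠ r', S_i = 2I - (2ρ/(1+4ρ)) v_i v_iᵀ where (v_i) ranges over all C(p,2) such vectors, and S̄ = (1/M) Σ_i S_i with M = C(p,2). Then log det S̄ - (1/M) Σ_i log det S_i ≤ 16 ρ². -/

import Mathlib

open Matrix Finset

lemma det_aux {p : ℕ} (a c : ℝ) (ha : a ≠ 0) (u : Fin p → ℝ) :
    ((a • (1 : Matrix (Fin p) (Fin p) ℝ)) - c • vecMulVec u u).det
      = a ^ p * (1 - (c / a) * (u ⬝ᵥ u)) := by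
  have h1 : (a • (1 : Matrix (Fin p) (Fin p) ℝ)) - c • vecMulVec u u
      = a • ((1 : Matrix (Fin p) (Fin p) ℝ) + vecMulVec ((-(c/a)) • u) u) := by
    ext i j
    simp [vecMulVec_apply, Matrix.one_apply, mul_add, Pi.smul_apply, smul_eq_mul]
    field_simp
    ring
  rw [h1, Matrix.det_smul, vecMulVec_eq Unit, Matrix.det_one_add_replicateCol_mul_replicateRow,
    Fintype.card_fin]
  rw [dotProduct_smul]
  simp [smul_eq_mul]
  tauto

lemma two_mul_sum_pairs {p : ℕ} (f : Fin p × Fin p → ℝ) (hf : ∀ q : Fin p × Fin p, f q.swap = f q) :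
    2 * ∑ q ∈ Finset.univ.filter (fun q : Fin p × Fin p => q.1 < q.2), f q
      = (∑ q : Fin p × Fin p, f q) - ∑ r : Fin p, f (r, r) := by
  classical
  have h1 : (∑ q : Fin p × Fin p, f q)
      = ∑ q ∈ Finset.univ.filter (fun q : Fin p × Fin p => q.1 < q.2), f q
        + ∑ q ∈ Finset.univ.filter (fun q : Fin p × Fin p => ¬ q.1 < q.2), f q :=
    (Finset.sum_filter_add_sum_filter_not _ _ _).symm
  have h2 : ∑ q ∈ Finset.univ.filter (fun q : Fin p × Fin p => ¬ q.1 < q.2), f q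
      = ∑ q ∈ Finset.univ.filter (fun q : Fin p × Fin p => q.2 < q.1), f q
        + ∑ q ∈ Finset.univ.filter (fun q : Fin p × Fin p => q.1 = q.2), f q := by
    rw [← Finset.sum_filter_add_sum_filter_not
      (Finset.univ.filter (fun q : Fin p × Fin p => ¬ q.1 < q.2)) (fun q => q.2 < q.1) f]
    congr 1
    · congr 1
      rw [Finset.filter_filter]
      apply Finset.filter_congr
      intro q _
      exact ⟨fun h => h.2, fun h => ⟨lt_asymm h, h⟩⟩
    · congr 1
      rw [Finset.filter_filter]
      apply Finset.filter_congr
      intro q _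
      constructor
      · rintro ⟨h1', h2'⟩; exact le_antisymm (not_lt.mp h2') (not_lt.mp h1')
      · intro h; exact ⟨by simp [h], by simp [h]⟩
  have h3 : ∑ q ∈ Finset.univ.filter (fun q : Fin p × Fin p => q.2 < q.1), f q
      = ∑ q ∈ Finset.univ.filter (fun q : Fin p × Fin p => q.1 < q.2), f q := by
    refine Finset.sum_equiv (Equiv.prodComm (Fin p) (Fin p)) ?_ ?_
    · intro q; simp [Equiv.prodComm]
    · intro q hq; rw [← hf q]; rfl
  have h4 : ∑ q ∈ Finset.univ.filter (fun q : Fin p × Fin p => q.1 = q.2), f q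
      = ∑ r : Fin p, f (r, r) := by
    refine Finset.sum_nbij' (fun q => q.1) (fun r => (r, r)) ?_ ?_ ?_ ?_ ?_ <;>
      simp +contextual [Prod.ext_iff, eq_comm]
  rw [h1, h2, h3, h4]; ring

lemma entry_lemma {p : ℕ} (a b : Fin p) :
    ∑ q ∈ Finset.univ.filter (fun q : Fin p × Fin p => q.1 < q.2),
      ((Pi.single q.1 1 + Pi.single q.2 1 : Fin p → ℝ) a * (Pi.single q.1 1 + Pi.single q.2 1 : Fin p → ℝ) b)
    = (if a = b then (p:ℝ) - 2 else 0) + 1 := by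
  classical
  have key := two_mul_sum_pairs
    (f := fun q : Fin p × Fin p =>
      (Pi.single q.1 1 + Pi.single q.2 1 : Fin p → ℝ) a * (Pi.single q.1 1 + Pi.single q.2 1 : Fin p → ℝ) b)
    (by intro q; simp [Prod.swap]; ring)
  have hT : (∑ q : Fin p × Fin p,
      (Pi.single q.1 1 + Pi.single q.2 1 : Fin p → ℝ) a * (Pi.single q.1 1 + Pi.single q.2 1 : Fin p → ℝ) b)
      = (if a = b then 2*(p:ℝ) else 0) + 2 := by
    rw [Fintype.sum_prod_type]
    simp [Pi.single_apply, add_mul, mul_add, Finset.sum_add_distrib, Finset.sum_ite_eq,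
      Finset.sum_ite_eq', mul_ite, ite_mul]
    by_cases hab : a = b <;> simp [hab] <;> ring
  have hD : (∑ r : Fin p,
      (Pi.single r 1 + Pi.single r 1 : Fin p → ℝ) a * (Pi.single r 1 + Pi.single r 1 : Fin p → ℝ) b)
      = if a = b then (4:ℝ) else 0 := by
    simp [Pi.single_apply, add_mul, mul_add, Finset.sum_add_distrib, mul_ite, ite_mul]
    by_cases hab : a = b <;> simp [hab] <;> norm_num
  rw [hT, hD] at key
  by_cases hab : a = b <;> simp [hab] at key ⊢ <;> linarith

set_option maxHeartbeats 2000000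

/-- Key single-sample bound (33): for the ensemble `S_q = 2I - (2ρ/(1+4ρ)) v_q v_qᵀ`,
`v_q = e_r + e_{r'}` ranging over all `M = C(p,2)` pairs `r < r'`, and
`S̄ = (1/M) Σ S_q`, we have `log det S̄ - (1/M) Σ log det S_q ≤ 16 ρ²`. -/
theorem stmt6 (p : ℕ) (hp : 2 ≤ p) (ρ : ℝ) (hρ0 : 0 < ρ) (hρ1 : ρ ≤ 1/4) :
    let pairs : Finset (Fin p × Fin p) := Finset.univ.filter (fun q => q.1 < q.2)
    let M : ℝ := (p.choose 2 : ℝ)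
    let v : Fin p × Fin p → (Fin p → ℝ) := fun q => Pi.single q.1 1 + Pi.single q.2 1
    let S : Fin p × Fin p → Matrix (Fin p) (Fin p) ℝ := fun q =>
      (2 : ℝ) • (1 : Matrix (Fin p) (Fin p) ℝ)
        - (2 * ρ / (1 + 4 * ρ)) • Matrix.vecMulVec (v q) (v q)
    let Sbar : Matrix (Fin p) (Fin p) ℝ := (1 / M) • ∑ q ∈ pairs, S q
    Real.log Sbar.det - (1 / M) * ∑ q ∈ pairs, Real.log (S q).det ≤ 16 * ρ ^ 2 := by
  classical
  set c : ℝ := 2 * ρ / (1 + 4 * ρ) with hc_def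
  intro pairs M v S Sbar
  have hSq : ∀ q, S q = (2:ℝ) • (1 : Matrix (Fin p) (Fin p) ℝ) - c • vecMulVec (v q) (v q) :=
    fun q => rfl
  have hvq : ∀ q : Fin p × Fin p, v q = Pi.single q.1 1 + Pi.single q.2 1 := fun q => rfl
  have hpairs : pairs = Finset.univ.filter (fun q : Fin p × Fin p => q.1 < q.2) := rfl
  have hSbardef : Sbar = (1/M) • ∑ q ∈ pairs, S q := rfl
  have hden : (0:ℝ) < 1 + 4 * ρ := by linarith
  have hc0 : 0 < c := by rw [hc_def]; positivity
  have hc2 : c ≤ 2 * ρ := by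
    rw [hc_def, div_le_iff₀ hden]; nlinarith
  have hc14 : c ≤ 1/4 := by
    rw [hc_def, div_le_iff₀ hden]; nlinarith
  have hq : (2:ℝ) ≤ (p:ℝ) := by exact_mod_cast hp
  have hq0 : (0:ℝ) < (p:ℝ) := by linarith
  have hq1 : (1:ℝ) ≤ (p:ℝ) - 1 := by linarith
  have hppos : (0:ℝ) < (p:ℝ) * ((p:ℝ) - 1) := by nlinarith
  have hM : M = (p:ℝ) * ((p:ℝ) - 1) / 2 := Nat.cast_choose_two ℝ p
  have hM0 : (0:ℝ) < M := by rw [hM]; nlinarith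
  -- cardinality of pairs
  have hcard : ((pairs.card : ℝ)) = M := by
    have h := two_mul_sum_pairs (p := p) (fun _ => (1:ℝ)) (fun _ => rfl)
    simp only [Finset.sum_const, nsmul_eq_mul, mul_one, Finset.card_univ,
      Fintype.card_prod, Fintype.card_fin, Nat.cast_mul] at h
    rw [hpairs, hM]
    rw [eq_div_iff (by norm_num : (2:ℝ) ≠ 0)]
    nlinarith [h]
  -- dot products
  have hvsq : ∀ q ∈ pairs, (v q) ⬝ᵥ (v q) = (2:ℝ) := by
    intro q hq'
    have hne : q.1 ≠ q.2 := ne_of_lt (by simpa [hpairs] using hq')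
    rw [hvq]
    simp [dotProduct, Pi.single_apply, add_mul, mul_add, Finset.sum_add_distrib,
      mul_ite, ite_mul, Finset.sum_ite_eq, Finset.sum_ite_eq', hne, hne.symm]
    norm_num
  -- determinant of each S q
  have h1c : (0:ℝ) < 1 - c := by linarith
  have hdetS : ∀ q ∈ pairs, (S q).det = 2 ^ p * (1 - c) := by
    intro q hq'
    rw [hSq, det_aux 2 c two_ne_zero (v q), hvsq q hq']
    norm_num
  have hlog_sum : ∑ q ∈ pairs, Real.log (S q).det
      = M * ((p:ℝ) * Real.log 2 + Real.log (1 - c)) := by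
    rw [Finset.sum_congr rfl (fun q hq' => by rw [hdetS q hq'])]
    rw [Finset.sum_const, nsmul_eq_mul, hcard]
    congr 1
    rw [Real.log_mul (by positivity) (ne_of_gt h1c), Real.log_pow]
  -- entrywise sum of products
  have hent : ∀ i j : Fin p, ∑ q ∈ pairs, v q i * v q j
      = (if i = j then (p:ℝ) - 2 else 0) + 1 := by
    intro i j
    rw [hpairs]
    simpa only [hvq] using entry_lemma (p := p) i j
  -- closed form for Sbar
  set X1 : ℝ := c * ((p:ℝ) - 2) / ((p:ℝ) * ((p:ℝ) - 1)) with hX1def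
  set Y : ℝ := c / (((p:ℝ) - 1) * (1 - X1)) with hYdef
  have hX1a : 0 ≤ X1 := by
    apply div_nonneg; nlinarith; nlinarith
  have hX1b : X1 ≤ 1/4 := by
    rw [hX1def, div_le_iff₀ hppos]; nlinarith
  have h1X1 : (3:ℝ)/4 ≤ 1 - X1 := by linarith
  have h1X1pos : (0:ℝ) < 1 - X1 := by linarith
  have hsum : ∑ q ∈ pairs, S q
      = (2 * M - c * ((p:ℝ) - 2)) • (1 : Matrix (Fin p) (Fin p) ℝ)
        - c • vecMulVec (fun _ => (1:ℝ)) (fun _ => 1) := by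
    ext i j
    rw [Matrix.sum_apply]
    have hterm : ∀ q ∈ pairs, (S q) i j
        = 2 * (if i = j then (1:ℝ) else 0) - c * (v q i * v q j) := by
      intro q _
      rw [hSq]
      simp [Matrix.sub_apply, Matrix.smul_apply, Matrix.one_apply, vecMulVec_apply, smul_eq_mul]
    rw [Finset.sum_congr rfl hterm, Finset.sum_sub_distrib, ← Finset.mul_sum, ← Finset.mul_sum, hent i j,
      Finset.sum_const, nsmul_eq_mul, hcard]
    simp only [Matrix.sub_apply, Matrix.smul_apply, Matrix.one_apply, vecMulVec_apply,
      smul_eq_mul]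
    by_cases hij : i = j <;> simp [hij] <;> ring
  have ha_ne : (2 * M - c * ((p:ℝ) - 2)) / M ≠ 0 := by
    apply ne_of_gt
    apply div_pos _ hM0
    rw [hM]; nlinarith
  have hdot1 : (fun _ : Fin p => (1:ℝ)) ⬝ᵥ (fun _ => (1:ℝ)) = (p:ℝ) := by
    simp [dotProduct]
  have hSbar2 : Sbar = ((2 * M - c * ((p:ℝ) - 2)) / M) • (1 : Matrix (Fin p) (Fin p) ℝ)
      - (c / M) • vecMulVec (fun _ => (1:ℝ)) (fun _ => 1) := by
    rw [hSbardef, hsum, smul_sub, smul_smul, smul_smul]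
    congr 2 <;> ring
  have ha_eq : (2 * M - c * ((p:ℝ) - 2)) / M = 2 * (1 - X1) := by
    rw [hM, hX1def]
    field_simp
  have hba_eq : ((c / M) / ((2 * M - c * ((p:ℝ) - 2)) / M)) * (p:ℝ) = Y := by
    rw [ha_eq, hYdef, hM, hX1def]
    rw [div_div_eq_mul_div, div_mul_eq_mul_div, div_mul_eq_mul_div]
    rw [div_eq_div_iff]
    · field_simp
    · positivity
    · positivity
  have hdetSbar : Sbar.det = (2 * (1 - X1)) ^ p * (1 - Y) := by
    rw [hSbar2, det_aux _ _ ha_ne, hdot1, hba_eq, ha_eq]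
  -- bounds on Y
  have hYpos_den : (0:ℝ) < ((p:ℝ) - 1) * (1 - X1) := by nlinarith
  have hY0 : 0 ≤ Y := by rw [hYdef]; positivity
  have hY13 : Y ≤ 1/3 := by
    rw [hYdef, div_le_iff₀ hYpos_den]; nlinarith
  have h1Ypos : (0:ℝ) < 1 - Y := by linarith
  -- key combination inequality
  have hkey : c ≤ (p:ℝ) * X1 + Y := by
    have e1 : (p:ℝ) * X1 = c * ((p:ℝ) - 2) / ((p:ℝ) - 1) := by
      rw [hX1def]; field_simp
    have e2 : c / ((p:ℝ) - 1) ≤ Y := by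
      rw [hYdef, div_le_div_iff₀ (by linarith) hYpos_den]
      nlinarith [mul_nonneg (mul_nonneg hc0.le (by linarith : (0:ℝ) ≤ (p:ℝ) - 1)) hX1a]
    have e3 : c * ((p:ℝ) - 2) / ((p:ℝ) - 1) + c / ((p:ℝ) - 1) = c := by
      field_simp; ring
    linarith [e1, e2, e3]
  -- take logs
  have hlogSbar : Real.log Sbar.det
      = (p:ℝ) * (Real.log 2 + Real.log (1 - X1)) + Real.log (1 - Y) := by
    rw [hdetSbar, Real.log_mul (pow_ne_zero _ (by positivity)) (ne_of_gt h1Ypos),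
      Real.log_pow, Real.log_mul two_ne_zero (ne_of_gt h1X1pos)]
  rw [hlogSbar, hlog_sum]
  have hMcancel : (1 / M) * (M * ((p:ℝ) * Real.log 2 + Real.log (1 - c)))
      = (p:ℝ) * Real.log 2 + Real.log (1 - c) := by
    field_simp
  rw [hMcancel]
  -- log bounds
  have hb1 : Real.log (1 - X1) ≤ -X1 := by
    have := Real.log_le_sub_one_of_pos h1X1pos; linarith
  have hb2 : Real.log (1 - Y) ≤ -Y := by
    have := Real.log_le_sub_one_of_pos h1Ypos; linarith
  have hb3 : -Real.log (1 - c) ≤ c / (1 - c) := by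
    have h := Real.log_le_sub_one_of_pos (inv_pos.mpr h1c)
    rw [Real.log_inv] at h
    have h' : (1 - c)⁻¹ - 1 = c / (1 - c) := by field_simp; ring
    linarith
  have hb1' : (p:ℝ) * Real.log (1 - X1) ≤ (p:ℝ) * (-X1) :=
    mul_le_mul_of_nonneg_left hb1 (le_of_lt hq0)
  have hfinal : c / (1 - c) - c ≤ 16 * ρ ^ 2 := by
    have he : c / (1 - c) - c = c ^ 2 / (1 - c) := by
      field_simp; ring
    rw [he, div_le_iff₀ h1c]
    nlinarith [sq_nonneg ρ, mul_le_mul hc2 hc2 (le_of_lt hc0) (by linarith : (0:ℝ) ≤ 2 * ρ)]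
  nlinarith [hb1', hb2, hb3, hkey, hfinal]
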